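/- XOR is purely synergistic for I_red: let X and Y be independent uniformly distributed random variables on {0,1} and let Z = X ⊕ Y (addition modulo 2). Then I_red(Z;X,Y) = 0, and consequently the synergistic partial information I(Z;X,Y) − I(Z;X) − I(Z;Y) + I_red(Z;X,Y) equals I(Z;X,Y) = log 2 (one bit). -/
import Mathlib


open scoped BigOperators

/-- `p` is a probability mass function on a finite type. -/
def IsPMF {α : Type*} [Fintype α] (p : α → ℝ) : Prop :=
  (∀ a, 0 ≤ p a) ∧ ∑ a, p a = 1

/-- Kullback–Leibler divergence `D(u‖v) = Σ u log (u/v)` (with the convention `0 log 0 = 0`),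
`⊤` if absolute continuity fails, i.e. if `u a > 0 = v a` for some `a`. -/
noncomputable def klDiv {α : Type*} [Fintype α] (u v : α → ℝ) : EReal :=
  if ∀ a, 0 < u a → 0 < v a then ((∑ a, u a * Real.log (u a / v a) : ℝ) : EReal) else ⊤

variable {𝓧 𝓨 𝓩 : Type*} [Fintype 𝓧] [Fintype 𝓨] [Fintype 𝓩]

/-- Marginal distribution of the first variable `X`. -/
noncomputable def margX (p : 𝓧 × 𝓨 × 𝓩 → ℝ) (x : 𝓧) : ℝ := ∑ y, ∑ z, p (x, y, z)

/-- Marginal distribution of the second variable `Y`. -/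
noncomputable def margY (p : 𝓧 × 𝓨 × 𝓩 → ℝ) (y : 𝓨) : ℝ := ∑ x, ∑ z, p (x, y, z)

/-- Marginal distribution of the third variable `Z`. -/
noncomputable def margZ (p : 𝓧 × 𝓨 × 𝓩 → ℝ) (z : 𝓩) : ℝ := ∑ x, ∑ y, p (x, y, z)

/-- Joint marginal `p(x,z)`. -/
noncomputable def margXZ (p : 𝓧 × 𝓨 × 𝓩 → ℝ) (x : 𝓧) (z : 𝓩) : ℝ := ∑ y, p (x, y, z)

/-- Joint marginal `p(y,z)`. -/
noncomputable def margYZ (p : 𝓧 × 𝓨 × 𝓩 → ℝ) (y : 𝓨) (z : 𝓩) : ℝ := ∑ x, p (x, y, z)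

/-- Joint marginal `p(x,y)`. -/
noncomputable def margXY (p : 𝓧 × 𝓨 × 𝓩 → ℝ) (x : 𝓧) (y : 𝓨) : ℝ := ∑ z, p (x, y, z)

/-- Conditional distribution `p(·|x)` of `Z` given `X = x`. -/
noncomputable def condX (p : 𝓧 × 𝓨 × 𝓩 → ℝ) (x : 𝓧) : 𝓩 → ℝ :=
  fun z => margXZ p x z / margX p x

/-- Conditional distribution `p(·|y)` of `Z` given `Y = y`. -/
noncomputable def condY (p : 𝓧 × 𝓨 × 𝓩 → ℝ) (y : 𝓨) : 𝓩 → ℝ :=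
  fun z => margYZ p y z / margY p y

/-- Conditional distribution `p(·|x,y)` of `Z` given `(X,Y) = (x,y)`. -/
noncomputable def condXY (p : 𝓧 × 𝓨 × 𝓩 → ℝ) (x : 𝓧) (y : 𝓨) : 𝓩 → ℝ :=
  fun z => p (x, y, z) / margXY p x y

/-- `C_X`: the convex hull of the conditionals `{p(·|x) : p(x) > 0}`. -/
noncomputable def CXhull (p : 𝓧 × 𝓨 × 𝓩 → ℝ) : Set (𝓩 → ℝ) :=
  convexHull ℝ {q | ∃ x, 0 < margX p x ∧ q = condX p x}

/-- `C_Y`: the convex hull of the conditionals `{p(·|y) : p(y) > 0}`. -/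
noncomputable def CYhull (p : 𝓧 × 𝓨 × 𝓩 → ℝ) : Set (𝓩 → ℝ) :=
  convexHull ℝ {q | ∃ y, 0 < margY p y ∧ q = condY p y}

/-- Mutual information `I(Z;X)` (terms with `p(x,z) = 0` vanish). -/
noncomputable def miZX (p : 𝓧 × 𝓨 × 𝓩 → ℝ) : ℝ :=
  ∑ x, ∑ z, margXZ p x z * Real.log (margXZ p x z / (margX p x * margZ p z))

/-- Mutual information `I(Z;Y)`. -/
noncomputable def miZY (p : 𝓧 × 𝓨 × 𝓩 → ℝ) : ℝ :=
  ∑ y, ∑ z, margYZ p y z * Real.log (margYZ p y z / (margY p y * margZ p z))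

/-- Mutual information `I(Z;X,Y)` between `Z` and the joint variable `(X,Y)`. -/
noncomputable def miZXY (p : 𝓧 × 𝓨 × 𝓩 → ℝ) : ℝ :=
  ∑ x, ∑ y, ∑ z, p (x, y, z) * Real.log (p (x, y, z) / (margXY p x y * margZ p z))

/-- Projected information `I_pr(X ↘ Y; Z) =
`Σ_{x : p(x)>0} p(x)·[D(p(·|x)‖p_Z) − inf_{q ∈ C_Y} D(p(·|x)‖q)]`. -/
noncomputable def IprXY (p : 𝓧 × 𝓨 × 𝓩 → ℝ) : ℝ :=
  ∑ x, if 0 < margX p x then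
      margX p x * ((klDiv (condX p x) (margZ p)).toReal -
        (⨅ q ∈ CYhull p, klDiv (condX p x) q).toReal)
    else 0

/-- Projected information `I_pr(Y ↘ X; Z)`. -/
noncomputable def IprYX (p : 𝓧 × 𝓨 × 𝓩 → ℝ) : ℝ :=
  ∑ y, if 0 < margY p y then
      margY p y * ((klDiv (condY p y) (margZ p)).toReal -
        (⨅ q ∈ CXhull p, klDiv (condY p y) q).toReal)
    else 0

/-- Redundant information `I_red(Z;X,Y) = min {I_pr(X↘Y;Z), I_pr(Y↘X;Z)}`. -/
noncomputable def Ired (p : 𝓧 × 𝓨 × 𝓩 → ℝ) : ℝ := min (IprXY p) (IprYX p)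

/-- The XOR joint distribution: `X, Y` independent uniform bits and `Z = X ⊕ Y`:
`p(x,y,z) = (1/4)·1[z = x ⊕ y]`. -/
noncomputable def xorJoint : Bool × Bool × Bool → ℝ :=
  fun t => if t.2.2 = xor t.1 t.2.1 then 1 / 4 else 0

/-- XOR is purely synergistic for `I_red`: `I_red(Z;X,Y) = 0`, and consequently the
synergistic partial information `I(Z;X,Y) − I(Z;X) − I(Z;Y) + I_red(Z;X,Y)` equals
`I(Z;X,Y) = log 2` (one bit). -/

lemma margX_xor (x : Bool) : margX xorJoint x = 1/2 := by
  cases x <;> simp [margX, xorJoint, Fintype.sum_bool] <;> norm_num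

lemma margY_xor (y : Bool) : margY xorJoint y = 1/2 := by
  cases y <;> simp [margY, xorJoint, Fintype.sum_bool] <;> norm_num

lemma margZ_xor (z : Bool) : margZ xorJoint z = 1/2 := by
  cases z <;> simp [margZ, xorJoint, Fintype.sum_bool] <;> norm_num

lemma margXZ_xor (x z : Bool) : margXZ xorJoint x z = 1/4 := by
  cases x <;> cases z <;> simp [margXZ, xorJoint, Fintype.sum_bool] <;> norm_num

lemma margYZ_xor (y z : Bool) : margYZ xorJoint y z = 1/4 := by
  cases y <;> cases z <;> simp [margYZ, xorJoint, Fintype.sum_bool] <;> norm_num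

lemma margXY_xor (x y : Bool) : margXY xorJoint x y = 1/4 := by
  cases x <;> cases y <;> simp [margXY, xorJoint, Fintype.sum_bool] <;> norm_num

lemma condX_xor (x : Bool) : condX xorJoint x = fun _ => (1/2 : ℝ) := by
  funext z
  simp [condX, margXZ_xor, margX_xor]
  norm_num

lemma condY_xor (y : Bool) : condY xorJoint y = fun _ => (1/2 : ℝ) := by
  funext z
  simp [condY, margYZ_xor, margY_xor]
  norm_num

lemma klDiv_half_half :
    klDiv (fun _ : Bool => (1/2 : ℝ)) (fun _ : Bool => (1/2 : ℝ)) = (0 : EReal) := by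
  rw [klDiv, if_pos]
  · norm_num
  · intro a _; norm_num

lemma CYhull_xor : CYhull xorJoint = {fun _ => (1/2 : ℝ)} := by
  have h : {q | ∃ y, 0 < margY xorJoint y ∧ q = condY xorJoint y}
      = ({fun _ => (1/2 : ℝ)} : Set (Bool → ℝ)) := by
    ext q
    constructor
    · rintro ⟨y, _, rfl⟩; simp [condY_xor]
    · rintro rfl; exact ⟨true, by rw [margY_xor]; norm_num, (condY_xor true).symm⟩
  rw [CYhull, h, convexHull_singleton]

lemma CXhull_xor : CXhull xorJoint = {fun _ => (1/2 : ℝ)} := by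
  have h : {q | ∃ x, 0 < margX xorJoint x ∧ q = condX xorJoint x}
      = ({fun _ => (1/2 : ℝ)} : Set (Bool → ℝ)) := by
    ext q
    constructor
    · rintro ⟨x, _, rfl⟩; simp [condX_xor]
    · rintro rfl; exact ⟨true, by rw [margX_xor]; norm_num, (condX_xor true).symm⟩
  rw [CXhull, h, convexHull_singleton]

lemma margZ_fun_xor : margZ xorJoint = fun _ => (1/2 : ℝ) := by
  funext z; exact margZ_xor z

lemma IprXY_xor : IprXY xorJoint = 0 := by
  rw [IprXY]
  apply Finset.sum_eq_zero
  intro x _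
  rw [if_pos (by rw [margX_xor]; norm_num)]
  rw [condX_xor, margZ_fun_xor, CYhull_xor]
  simp [klDiv_half_half]

lemma IprYX_xor : IprYX xorJoint = 0 := by
  rw [IprYX]
  apply Finset.sum_eq_zero
  intro y _
  rw [if_pos (by rw [margY_xor]; norm_num)]
  rw [condY_xor, margZ_fun_xor, CXhull_xor]
  simp [klDiv_half_half]

lemma miZX_xor : miZX xorJoint = 0 := by
  rw [miZX]
  apply Finset.sum_eq_zero; intro x _
  apply Finset.sum_eq_zero; intro z _
  rw [margXZ_xor, margX_xor, margZ_xor]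
  norm_num

lemma miZY_xor : miZY xorJoint = 0 := by
  rw [miZY]
  apply Finset.sum_eq_zero; intro y _
  apply Finset.sum_eq_zero; intro z _
  rw [margYZ_xor, margY_xor, margZ_xor]
  norm_num

lemma miZXY_xor : miZXY xorJoint = Real.log 2 := by
  have h : ∀ x y z : Bool, margXY xorJoint x y = 1/4 := fun x y _ => margXY_xor x y
  rw [miZXY]
  simp only [Fintype.sum_bool, margXY_xor, margZ_xor, xorJoint]
  norm_num
  ring

theorem xor_purely_synergistic :
    Ired xorJoint = 0 ∧
      miZXY xorJoint - miZX xorJoint - miZY xorJoint + Ired xorJoint = miZXY xorJoint ∧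
      miZXY xorJoint = Real.log 2 := by
  refine ⟨?_, ?_, miZXY_xor⟩
  · rw [Ired, IprXY_xor, IprYX_xor]; norm_num
  · rw [Ired, IprXY_xor, IprYX_xor, miZX_xor, miZY_xor]; norm_num
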